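/- Let p : G → B be a covering homomorphism of locally compact groups (a surjective continuous open group homomorphism with discrete kernel that is a local homeomorphism), and let Λ ⊆ B be a uniform approximate lattice. Then p⁻¹(Λ) is a uniform approximate lattice in G. -/

import Mathlib

open scoped Pointwise
open Topology

/-- A uniform approximate lattice: a symmetric subset containing the identity that is an
approximate subgroup, relatively dense and uniformly discrete. -/
def IsUniformApproxLattice {G : Type*} [Group G] [TopologicalSpace G] (Λ : Set G) : Prop :=
  Λ⁻¹ = Λ ∧ (1 : G) ∈ Λ ∧
    (∃ F : Set G, F.Finite ∧ Λ * Λ ⊆ F * Λ) ∧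
    (∃ K : Set G, IsCompact K ∧ Λ * K = Set.univ) ∧
    (∃ V : Set G, IsCompact V ∧ V ∈ 𝓝 (1 : G) ∧ ∀ g : G, (g • V ∩ Λ).Subsingleton)

/-- Let `p : G → B` be a covering homomorphism of locally compact
groups (a surjective continuous open homomorphism with discrete kernel that is a local
homeomorphism) and `Λ ⊆ B` a uniform approximate lattice. Then `p⁻¹(Λ)` is a uniform
approximate lattice in `G`. -/
theorem preimage_uniformApproxLattice_of_covering
    {G B : Type*} [Group G] [TopologicalSpace G] [IsTopologicalGroup G] [LocallyCompactSpace G]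
    [Group B] [TopologicalSpace B] [IsTopologicalGroup B] [LocallyCompactSpace B]
    (p : G →* B) (hc : Continuous p) (hs : Function.Surjective p) (ho : IsOpenMap p)
    (hk : DiscreteTopology ↥p.ker) (hl : IsLocalHomeomorph p)
    (Λ : Set B) (hΛ : IsUniformApproxLattice Λ) :
    IsUniformApproxLattice (p ⁻¹' Λ) := by
  obtain ⟨hsym, hone, ⟨F, hFfin, hFΛ⟩, ⟨K, hKc, hKΛ⟩, ⟨V, hVc, hVn, hVs⟩⟩ := hΛ
  refine ⟨?_, ?_, ?_, ?_, ?_⟩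
  · ext x
    simp only [Set.mem_inv, Set.mem_preimage, map_inv]
    rw [← Set.mem_inv, hsym]
  · simp [hone]
  · -- approximate subgroup
    refine ⟨Function.surjInv hs '' F, hFfin.image _, ?_⟩
    rintro z hz
    rw [Set.mem_mul] at hz
    obtain ⟨x, hx, y, hy, rfl⟩ := hz
    have hpz : p x * p y ∈ F * Λ := hFΛ (Set.mul_mem_mul hx hy)
    rw [Set.mem_mul] at hpz
    obtain ⟨f, hf, l, hl', hfl⟩ := hpz
    refine Set.mem_mul.2 ⟨Function.surjInv hs f, Set.mem_image_of_mem _ hf,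
      (Function.surjInv hs f)⁻¹ * (x * y), ?_, by group⟩
    have hps : p (Function.surjInv hs f) = f := Function.surjInv_eq hs f
    simp only [Set.mem_preimage, map_mul, map_inv, hps]
    rw [← hfl]
    simpa [mul_assoc] using hl'
  · -- relatively dense
    have hC : ∀ b : B, ∃ C : Set G, IsCompact C ∧ C ∈ 𝓝 (Function.surjInv hs b) :=
      fun b => exists_compact_mem_nhds _
    choose C hCc hCn using hC
    have hU : ∀ b ∈ K, p '' interior (C b) ∈ 𝓝 b := by
      intro b _
      refine (ho _ isOpen_interior).mem_nhds ?_
      exact ⟨Function.surjInv hs b, mem_interior_iff_mem_nhds.2 (hCn b), Function.surjInv_eq hs b⟩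
    obtain ⟨t, -, ht⟩ := hKc.elim_nhds_subcover (fun b => p '' interior (C b)) hU
    refine ⟨⋃ b ∈ t, C b, t.isCompact_biUnion (fun b _ => hCc b), ?_⟩
    rw [Set.eq_univ_iff_forall]
    intro g
    have hpg : p g ∈ Λ * K := by rw [hKΛ]; trivial
    rw [Set.mem_mul] at hpg
    obtain ⟨l, hl', k, hk', hlk⟩ := hpg
    obtain ⟨b, hbt, x, hx, hpx⟩ := Set.mem_iUnion₂.1 (ht hk')
    refine Set.mem_mul.2 ⟨g * x⁻¹, ?_, x, Set.mem_iUnion₂.2 ⟨b, hbt, interior_subset hx⟩, by group⟩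
    simp only [Set.mem_preimage, map_mul, map_inv, hpx, ← hlk]
    simpa using hl'
  · -- uniformly discrete
    have h1 : IsOpen ({1} : Set ↥p.ker) := isOpen_discrete _
    rw [isOpen_induced_iff] at h1
    obtain ⟨U, hUo, hU⟩ := h1
    have hU1 : (1 : G) ∈ U := by
      have : (⟨1, p.ker.one_mem⟩ : ↥p.ker) ∈ Subtype.val ⁻¹' U := by rw [hU]; rfl
      exact this
    have hUker : ∀ x ∈ p.ker, x ∈ U → x = 1 := by
      intro x hx hxU
      have : (⟨x, hx⟩ : ↥p.ker) ∈ Subtype.val ⁻¹' U := hxU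
      rw [hU] at this
      simpa [Subtype.ext_iff] using this
    obtain ⟨W, hWo, hW1, hWU⟩ := exists_open_nhds_one_mul_subset (hUo.mem_nhds hU1)
    set S : Set G := W ∩ W⁻¹ with hS
    have hSn : S ∈ 𝓝 (1 : G) := by
      refine Filter.inter_mem (hWo.mem_nhds hW1) ?_
      exact (hWo.inv).mem_nhds (by simpa using hW1)
    have hpV : p ⁻¹' V ∈ 𝓝 (1 : G) := by
      have := hc.continuousAt (x := (1 : G))
      exact this.preimage_mem_nhds (by simpa using hVn)
    obtain ⟨Vg, hVgn, hVgsub, hVgc⟩ := local_compact_nhds (Filter.inter_mem hSn hpV)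
    refine ⟨Vg, hVgc, hVgn, ?_⟩
    intro g x hx y hy
    obtain ⟨hxg, hxΛ⟩ := hx
    obtain ⟨hyg, hyΛ⟩ := hy
    obtain ⟨v, hv, rfl⟩ := hxg
    obtain ⟨w, hw, rfl⟩ := hyg
    have hvS := (hVgsub hv).1
    have hwS := (hVgsub hw).1
    have hvV : p v ∈ V := (hVgsub hv).2
    have hwV : p w ∈ V := (hVgsub hw).2
    have hpeq : p g * p v = p g * p w := by
      have := hVs (p g) ⟨⟨p v, hvV, rfl⟩, by simpa [smul_eq_mul, map_mul] using hxΛ⟩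
        ⟨⟨p w, hwV, rfl⟩, by simpa [smul_eq_mul, map_mul] using hyΛ⟩
      simpa [smul_eq_mul] using this
    have hker : v⁻¹ * w ∈ p.ker := by
      rw [MonoidHom.mem_ker, map_mul, map_inv]
      have h2 := mul_left_cancel hpeq
      rw [h2]; group
    have hmemU : v⁻¹ * w ∈ U := by
      apply hWU
      exact Set.mul_mem_mul (by simpa using hvS.2) hwS.1
    have : v⁻¹ * w = 1 := hUker _ hker hmemU
    have hvw : v = w := by
      have := congrArg (v * ·) this
      simpa [mul_assoc] using this.symm
    rw [hvw]
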